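/- Let (u,v) be C² on the closure of Ω and P be C¹ on the closure of Ω, with ∂_x u + ∂_y v = 0 in Ω, u = v = 0 on {x = 0} ∪ {y = 0} ∪ {y = 2}, and on {x = L}: ∂_y u + ∂_x v = 0 and P = 2ε ∂_x u. Then ∫_Ω (−εΔu) u + ∫_Ω (−εΔv) v + ∫_Ω (u ∂_x P + v ∂_y P) = ε ∫_Ω ( |∂_y u|² + |∂_x v|² + 4|∂_y v|² + 2 (∂_x v)(∂_y u) ). -/

import Mathlib

open MeasureTheory Set Real Function

noncomputable section

/-- The channel domain `Ω = (0,L) × (0,2)`. -/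
def Omg (L : ℝ) : Set (ℝ × ℝ) := Ioo (0:ℝ) L ×ˢ Ioo (0:ℝ) 2

/-- Partial derivative in the first (x) variable of a curried function. -/
def pdx (f : ℝ → ℝ → ℝ) : ℝ → ℝ → ℝ := fun x y => deriv (fun s => f s y) x

/-- Partial derivative in the second (y) variable of a curried function. -/
def pdy (f : ℝ → ℝ → ℝ) : ℝ → ℝ → ℝ := fun x y => deriv (fun t => f x t) y

/-- Laplacian `Δ = ∂ₓₓ + ∂_{yy}`. -/
def plap (f : ℝ → ℝ → ℝ) : ℝ → ℝ → ℝ := fun x y => pdx (pdx f) x y + pdy (pdy f) x y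

/-- Integral over `Ω`. -/
def intO (L : ℝ) (F : ℝ → ℝ → ℝ) : ℝ := ∫ p in Omg L, F p.1 p.2

/-- `L²(Ω)` norm. -/
def l2 (L : ℝ) (f : ℝ → ℝ → ℝ) : ℝ := Real.sqrt (intO L fun x y => (f x y)^2)

/-- `L^∞(Ω)` (sup) norm. -/
def supO (L : ℝ) (f : ℝ → ℝ → ℝ) : ℝ := sSup ((fun p : ℝ × ℝ => |f p.1 p.2|) '' Omg L)

/-- `|∇f|²`. -/
def gradSq (f : ℝ → ℝ → ℝ) (x y : ℝ) : ℝ := (pdx f x y)^2 + (pdy f x y)^2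

/-- Energy norm `‖u,v‖_E = ‖√ε ∇u‖_{L²(Ω)} + ‖√ε ∇v‖_{L²(Ω)}`. -/
def normE (ε L : ℝ) (u v : ℝ → ℝ → ℝ) : ℝ :=
  Real.sqrt (intO L fun x y => ε * gradSq u x y) + Real.sqrt (intO L fun x y => ε * gradSq v x y)

/-- Positivity norm `‖u,v‖_P = ‖√(u_s) ∇v‖_{L²(Ω)}`. -/
def normP (L : ℝ) (us v : ℝ → ℝ → ℝ) : ℝ :=
  Real.sqrt (intO L fun x y => us x y * gradSq v x y)

/-- The `X` norm `‖u,v‖_X = ‖u,v‖_E + ε^{γ/2}(‖√ε u‖_∞ + ‖√ε v‖_∞)`. -/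
def normX (ε γ L : ℝ) (u v : ℝ → ℝ → ℝ) : ℝ :=
  normE ε L u v + ε ^ (γ/2) *
    (supO L (fun x y => Real.sqrt ε * u x y) + supO L (fun x y => Real.sqrt ε * v x y))

/-- Linearized convection term `S_u`. -/
def Su (us vs u v : ℝ → ℝ → ℝ) (x y : ℝ) : ℝ :=
  us x y * pdx u x y + pdx us x y * u x y + pdy us x y * v x y + vs x y * pdy u x y

/-- Linearized convection term `S_v`. -/
def Sv (us vs u v : ℝ → ℝ → ℝ) (x y : ℝ) : ℝ :=
  us x y * pdx v x y + pdx vs x y * u x y + vs x y * pdy v x y + pdy vs x y * v x y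

/-- The `W^{100,∞}` norm of a function on `(0,2)`. -/
def W100 (h : ℝ → ℝ) : ℝ :=
  sSup { r : ℝ | ∃ j ≤ 100, ∃ y ∈ Ioo (0:ℝ) 2, r = |deriv^[j] h y| }

/- ### auxiliary lemmas -/

lemma hasDerivAt_slice_x {E : Type*} [NormedAddCommGroup E] [NormedSpace ℝ E]
    (F : ℝ × ℝ → E) (x y : ℝ) (hf : DifferentiableAt ℝ F (x, y)) :
    HasDerivAt (fun s => F (s, y)) (fderiv ℝ F (x, y) (1, 0)) x :=
  hf.hasFDerivAt.comp_hasDerivAt x ((hasDerivAt_id x).prodMk (hasDerivAt_const x y))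

lemma hasDerivAt_slice_y {E : Type*} [NormedAddCommGroup E] [NormedSpace ℝ E]
    (F : ℝ × ℝ → E) (x y : ℝ) (hf : DifferentiableAt ℝ F (x, y)) :
    HasDerivAt (fun t => F (x, t)) (fderiv ℝ F (x, y) (0, 1)) y :=
  hf.hasFDerivAt.comp_hasDerivAt y ((hasDerivAt_const y x).prodMk (hasDerivAt_id y))

lemma hasDerivAt_pdx (f : ℝ → ℝ → ℝ) (x y : ℝ)
    (hf : DifferentiableAt ℝ (uncurry f) (x, y)) :
    HasDerivAt (fun s => f s y) (pdx f x y) x := by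
  have h := hasDerivAt_slice_x (uncurry f) x y hf
  have h2 : pdx f x y = fderiv ℝ (uncurry f) (x, y) (1, 0) := h.deriv
  rw [pdx] at h2 ⊢
  simpa [h2] using h

lemma hasDerivAt_pdy (f : ℝ → ℝ → ℝ) (x y : ℝ)
    (hf : DifferentiableAt ℝ (uncurry f) (x, y)) :
    HasDerivAt (fun t => f x t) (pdy f x y) y := by
  have h := hasDerivAt_slice_y (uncurry f) x y hf
  have h2 : pdy f x y = fderiv ℝ (uncurry f) (x, y) (0, 1) := h.deriv
  rw [pdy] at h2 ⊢
  simpa [h2] using h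

lemma uncurry_pdx_eq (f : ℝ → ℝ → ℝ) (hf : Differentiable ℝ (uncurry f)) :
    uncurry (pdx f) = fun p : ℝ × ℝ => fderiv ℝ (uncurry f) p (1, 0) := by
  funext p
  obtain ⟨x, y⟩ := p
  exact (hasDerivAt_slice_x (uncurry f) x y (hf _)).deriv

lemma uncurry_pdy_eq (f : ℝ → ℝ → ℝ) (hf : Differentiable ℝ (uncurry f)) :
    uncurry (pdy f) = fun p : ℝ × ℝ => fderiv ℝ (uncurry f) p (0, 1) := by
  funext p
  obtain ⟨x, y⟩ := p
  exact (hasDerivAt_slice_y (uncurry f) x y (hf _)).deriv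

lemma contDiff_uncurry_pdx {n m : WithTop ℕ∞} (f : ℝ → ℝ → ℝ)
    (hf : ContDiff ℝ n (uncurry f)) (h : m + 1 ≤ n) :
    ContDiff ℝ m (uncurry (pdx f)) := by
  have hd : Differentiable ℝ (uncurry f) :=
    hf.differentiable (by rintro rfl; simp at h)
  rw [uncurry_pdx_eq f hd]
  exact (hf.fderiv_right h).clm_apply contDiff_const

lemma contDiff_uncurry_pdy {n m : WithTop ℕ∞} (f : ℝ → ℝ → ℝ)
    (hf : ContDiff ℝ n (uncurry f)) (h : m + 1 ≤ n) :
    ContDiff ℝ m (uncurry (pdy f)) := by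
  have hd : Differentiable ℝ (uncurry f) :=
    hf.differentiable (by rintro rfl; simp at h)
  rw [uncurry_pdy_eq f hd]
  exact (hf.fderiv_right h).clm_apply contDiff_const

lemma pdx_pdy_comm (f : ℝ → ℝ → ℝ) (hf : ContDiff ℝ 2 (uncurry f)) (x y : ℝ) :
    pdx (pdy f) x y = pdy (pdx f) x y := by
  set F := uncurry f with hF
  have hd : Differentiable ℝ F := hf.differentiable (by norm_num)
  have hd' : Differentiable ℝ (fderiv ℝ F) :=
    (hf.fderiv_right (m := 1) (by norm_num)).differentiable one_ne_zero
  have hsymm := second_derivative_symmetric (f := F) (f' := fderiv ℝ F)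
      (f'' := fderiv ℝ (fderiv ℝ F) (x, y)) (x := (x, y))
      (fun p => (hd p).hasFDerivAt) ((hd' (x, y)).hasFDerivAt)
  have h1 : HasDerivAt (fun s => pdy f s y)
      (fderiv ℝ (fderiv ℝ F) (x, y) (1, 0) (0, 1)) x := by
    have hc : HasDerivAt (fun s => fderiv ℝ F (s, y))
        (fderiv ℝ (fderiv ℝ F) (x, y) (1, 0)) x :=
      hasDerivAt_slice_x (fderiv ℝ F) x y (hd' (x, y))
    have := hc.clm_apply (hasDerivAt_const x ((0:ℝ), (1:ℝ)))
    simp only [map_zero, add_zero] at this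
    have heq : (fun s => fderiv ℝ F (s, y) ((0:ℝ), (1:ℝ))) = fun s => pdy f s y := by
      funext s
      exact ((hasDerivAt_slice_y F s y (hd _)).deriv).symm
    rwa [heq] at this
  have h2 : HasDerivAt (fun t => pdx f x t)
      (fderiv ℝ (fderiv ℝ F) (x, y) (0, 1) (1, 0)) y := by
    have hc : HasDerivAt (fun t => fderiv ℝ F (x, t))
        (fderiv ℝ (fderiv ℝ F) (x, y) (0, 1)) y :=
      hasDerivAt_slice_y (fderiv ℝ F) x y (hd' (x, y))
    have := hc.clm_apply (hasDerivAt_const y ((1:ℝ), (0:ℝ)))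
    simp only [map_zero, add_zero] at this
    have heq : (fun t => fderiv ℝ F (x, t) ((1:ℝ), (0:ℝ))) = fun t => pdx f x t := by
      funext t
      exact ((hasDerivAt_slice_x F x t (hd _)).deriv).symm
    rwa [heq] at this
  show deriv (fun s => pdy f s y) x = deriv (fun t => pdx f x t) y
  rw [h1.deriv, h2.deriv, hsymm]

lemma integrableOn_Omg {L : ℝ} {g : ℝ × ℝ → ℝ} (hg : Continuous g) :
    IntegrableOn g (Omg L) := by
  have hc : IsCompact (Icc (0:ℝ) L ×ˢ Icc (0:ℝ) 2) := isCompact_Icc.prod isCompact_Icc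
  exact (hg.continuousOn.integrableOn_compact hc).mono_set
    (prod_mono Ioo_subset_Icc_self Ioo_subset_Icc_self)

lemma restrict_Omg (L : ℝ) :
    volume.restrict (Omg L)
      = (volume.restrict (Ioo (0:ℝ) L)).prod (volume.restrict (Ioo (0:ℝ) 2)) :=
  (Measure.prod_restrict _ _).symm

lemma interval_eq_Ioo (a b : ℝ) (hab : a ≤ b) (g : ℝ → ℝ) :
    ∫ t in a..b, g t = ∫ t in Ioo a b, g t := by
  rw [intervalIntegral.integral_of_le hab, integral_Ioc_eq_integral_Ioo]

lemma intO_eq_iterated {L : ℝ} (hL : 0 ≤ L) (F : ℝ → ℝ → ℝ)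
    (hF : Continuous (fun p : ℝ × ℝ => F p.1 p.2)) :
    intO L F = ∫ x in (0:ℝ)..L, ∫ y in (0:ℝ)..2, F x y := by
  have hint : Integrable (fun p : ℝ × ℝ => F p.1 p.2)
      ((volume.restrict (Ioo (0:ℝ) L)).prod (volume.restrict (Ioo (0:ℝ) 2))) := by
    rw [Measure.prod_restrict]; exact integrableOn_Omg hF
  rw [intO, restrict_Omg, integral_prod _ hint]
  symm
  rw [interval_eq_Ioo 0 L hL]
  refine setIntegral_congr_fun measurableSet_Ioo fun x _ => ?_
  rw [interval_eq_Ioo 0 2 (by norm_num)]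

lemma intO_eq_iterated_symm {L : ℝ} (hL : 0 ≤ L) (F : ℝ → ℝ → ℝ)
    (hF : Continuous (fun p : ℝ × ℝ => F p.1 p.2)) :
    intO L F = ∫ y in (0:ℝ)..2, ∫ x in (0:ℝ)..L, F x y := by
  have hint : Integrable (fun p : ℝ × ℝ => F p.1 p.2)
      ((volume.restrict (Ioo (0:ℝ) L)).prod (volume.restrict (Ioo (0:ℝ) 2))) := by
    rw [Measure.prod_restrict]; exact integrableOn_Omg hF
  rw [intO, restrict_Omg, integral_prod_symm _ hint]
  symm
  rw [interval_eq_Ioo 0 2 (by norm_num)]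
  refine setIntegral_congr_fun measurableSet_Ioo fun y _ => ?_
  rw [interval_eq_Ioo 0 L hL]

lemma intO_add {L : ℝ} {F G : ℝ → ℝ → ℝ}
    (hF : Continuous (fun p : ℝ × ℝ => F p.1 p.2))
    (hG : Continuous (fun p : ℝ × ℝ => G p.1 p.2)) :
    intO L F + intO L G = intO L (fun x y => F x y + G x y) :=
  (integral_add (integrableOn_Omg hF) (integrableOn_Omg hG)).symm

/-- flux lemma in the x direction -/
lemma intO_pdx {L : ℝ} (hL : 0 ≤ L) (W : ℝ → ℝ → ℝ)
    (hW : ContDiff ℝ 1 (uncurry W)) :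
    intO L (pdx W) = ∫ y in (0:ℝ)..2, (W L y - W 0 y) := by
  have hcont : Continuous (fun p : ℝ × ℝ => pdx W p.1 p.2) :=
    (contDiff_uncurry_pdx (m := 0) W hW (by norm_num)).continuous
  rw [intO_eq_iterated_symm hL (pdx W) hcont]
  refine intervalIntegral.integral_congr fun y _ => ?_
  refine intervalIntegral.integral_eq_sub_of_hasDerivAt
    (fun x _ => hasDerivAt_pdx W x y (hW.differentiable one_ne_zero _)) ?_
  exact (hcont.comp (continuous_id.prodMk continuous_const)).intervalIntegrable 0 L

/-- flux lemma in the y direction -/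
lemma intO_pdy {L : ℝ} (hL : 0 ≤ L) (W : ℝ → ℝ → ℝ)
    (hW : ContDiff ℝ 1 (uncurry W)) :
    intO L (pdy W) = ∫ x in (0:ℝ)..L, (W x 2 - W x 0) := by
  have hcont : Continuous (fun p : ℝ × ℝ => pdy W p.1 p.2) :=
    (contDiff_uncurry_pdy (m := 0) W hW (by norm_num)).continuous
  rw [intO_eq_iterated hL (pdy W) hcont]
  refine intervalIntegral.integral_congr fun x _ => ?_
  refine intervalIntegral.integral_eq_sub_of_hasDerivAt
    (fun y _ => hasDerivAt_pdy W x y (hW.differentiable one_ne_zero _)) ?_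
  exact (hcont.comp (continuous_const.prodMk continuous_id)).intervalIntegrable 0 2

def Afun (ε : ℝ) (u v P : ℝ → ℝ → ℝ) : ℝ → ℝ → ℝ := fun x y =>
  -(ε * (pdx u x y * u x y + pdx v x y * v x y)) + P x y * u x y
    - 2 * ε * (v x y * pdy u x y)

def Bfun (ε : ℝ) (u v P : ℝ → ℝ → ℝ) : ℝ → ℝ → ℝ := fun x y =>
  -(ε * (pdy u x y * u x y + pdy v x y * v x y)) + P x y * v x y
    - 2 * ε * (v x y * pdy v x y)

section AB
variable (ε : ℝ) (u v P : ℝ → ℝ → ℝ)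

lemma contDiff_uncurry_Afun (hu : ContDiff ℝ 2 (uncurry u)) (hv : ContDiff ℝ 2 (uncurry v))
    (hP : ContDiff ℝ 1 (uncurry P)) : ContDiff ℝ 1 (uncurry (Afun ε u v P)) := by
  have hu1 : ContDiff ℝ 1 (uncurry u) := hu.of_le (by norm_num)
  have hv1 : ContDiff ℝ 1 (uncurry v) := hv.of_le (by norm_num)
  have hux : ContDiff ℝ 1 (uncurry (pdx u)) := contDiff_uncurry_pdx u hu (by norm_num)
  have hvx : ContDiff ℝ 1 (uncurry (pdx v)) := contDiff_uncurry_pdx v hv (by norm_num)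
  have huy : ContDiff ℝ 1 (uncurry (pdy u)) := contDiff_uncurry_pdy u hu (by norm_num)
  have h : uncurry (Afun ε u v P) = fun p : ℝ × ℝ =>
      -(ε * (uncurry (pdx u) p * uncurry u p + uncurry (pdx v) p * uncurry v p))
        + uncurry P p * uncurry u p - 2 * ε * (uncurry v p * uncurry (pdy u) p) := rfl
  rw [h]
  exact (((contDiff_const.mul ((hux.mul hu1).add (hvx.mul hv1))).neg.add (hP.mul hu1)).sub
    (contDiff_const.mul (hv1.mul huy)))

lemma contDiff_uncurry_Bfun (hu : ContDiff ℝ 2 (uncurry u)) (hv : ContDiff ℝ 2 (uncurry v))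
    (hP : ContDiff ℝ 1 (uncurry P)) : ContDiff ℝ 1 (uncurry (Bfun ε u v P)) := by
  have hu1 : ContDiff ℝ 1 (uncurry u) := hu.of_le (by norm_num)
  have hv1 : ContDiff ℝ 1 (uncurry v) := hv.of_le (by norm_num)
  have huy : ContDiff ℝ 1 (uncurry (pdy u)) := contDiff_uncurry_pdy u hu (by norm_num)
  have hvy : ContDiff ℝ 1 (uncurry (pdy v)) := contDiff_uncurry_pdy v hv (by norm_num)
  have h : uncurry (Bfun ε u v P) = fun p : ℝ × ℝ =>
      -(ε * (uncurry (pdy u) p * uncurry u p + uncurry (pdy v) p * uncurry v p))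
        + uncurry P p * uncurry v p - 2 * ε * (uncurry v p * uncurry (pdy v) p) := rfl
  rw [h]
  exact (((contDiff_const.mul ((huy.mul hu1).add (hvy.mul hv1))).neg.add (hP.mul hv1)).sub
    (contDiff_const.mul (hv1.mul hvy)))

lemma pdx_Afun (hu : ContDiff ℝ 2 (uncurry u)) (hv : ContDiff ℝ 2 (uncurry v))
    (hP : ContDiff ℝ 1 (uncurry P)) (x y : ℝ) :
    pdx (Afun ε u v P) x y =
      -(ε * ((pdx (pdx u) x y * u x y + pdx u x y * pdx u x y)
            + (pdx (pdx v) x y * v x y + pdx v x y * pdx v x y)))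
        + (pdx P x y * u x y + P x y * pdx u x y)
        - 2 * ε * (pdx v x y * pdy u x y + v x y * pdx (pdy u) x y) := by
  have hud : Differentiable ℝ (uncurry u) := hu.differentiable (by norm_num)
  have hvd : Differentiable ℝ (uncurry v) := hv.differentiable (by norm_num)
  have hPd : Differentiable ℝ (uncurry P) := hP.differentiable one_ne_zero
  have hux : Differentiable ℝ (uncurry (pdx u)) :=
    (contDiff_uncurry_pdx u hu (by norm_num)).differentiable one_ne_zero
  have hvx : Differentiable ℝ (uncurry (pdx v)) :=
    (contDiff_uncurry_pdx v hv (by norm_num)).differentiable one_ne_zero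
  have huy : Differentiable ℝ (uncurry (pdy u)) :=
    (contDiff_uncurry_pdy u hu (by norm_num)).differentiable one_ne_zero
  have hU := hasDerivAt_pdx u x y (hud _)
  have hV := hasDerivAt_pdx v x y (hvd _)
  have hP0 := hasDerivAt_pdx P x y (hPd _)
  have hUx := hasDerivAt_pdx (pdx u) x y (hux _)
  have hVx := hasDerivAt_pdx (pdx v) x y (hvx _)
  have hUy := hasDerivAt_pdx (pdy u) x y (huy _)
  have H : HasDerivAt (fun s => Afun ε u v P s y)
      (-(ε * ((pdx (pdx u) x y * u x y + pdx u x y * pdx u x y)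
            + (pdx (pdx v) x y * v x y + pdx v x y * pdx v x y)))
        + (pdx P x y * u x y + P x y * pdx u x y)
        - 2 * ε * (pdx v x y * pdy u x y + v x y * pdx (pdy u) x y)) x :=
    ((((hUx.mul hU).add (hVx.mul hV)).const_mul ε).neg.add (hP0.mul hU)).sub
      ((hV.mul hUy).const_mul (2 * ε))
  exact H.deriv

lemma pdy_Bfun (hu : ContDiff ℝ 2 (uncurry u)) (hv : ContDiff ℝ 2 (uncurry v))
    (hP : ContDiff ℝ 1 (uncurry P)) (x y : ℝ) :
    pdy (Bfun ε u v P) x y =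
      -(ε * ((pdy (pdy u) x y * u x y + pdy u x y * pdy u x y)
            + (pdy (pdy v) x y * v x y + pdy v x y * pdy v x y)))
        + (pdy P x y * v x y + P x y * pdy v x y)
        - 2 * ε * (pdy v x y * pdy v x y + v x y * pdy (pdy v) x y) := by
  have hud : Differentiable ℝ (uncurry u) := hu.differentiable (by norm_num)
  have hvd : Differentiable ℝ (uncurry v) := hv.differentiable (by norm_num)
  have hPd : Differentiable ℝ (uncurry P) := hP.differentiable one_ne_zero
  have huy : Differentiable ℝ (uncurry (pdy u)) :=
    (contDiff_uncurry_pdy u hu (by norm_num)).differentiable one_ne_zero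
  have hvy : Differentiable ℝ (uncurry (pdy v)) :=
    (contDiff_uncurry_pdy v hv (by norm_num)).differentiable one_ne_zero
  have hU := hasDerivAt_pdy u x y (hud _)
  have hV := hasDerivAt_pdy v x y (hvd _)
  have hP0 := hasDerivAt_pdy P x y (hPd _)
  have hUy := hasDerivAt_pdy (pdy u) x y (huy _)
  have hVy := hasDerivAt_pdy (pdy v) x y (hvy _)
  have H : HasDerivAt (fun t => Bfun ε u v P x t)
      (-(ε * ((pdy (pdy u) x y * u x y + pdy u x y * pdy u x y)
            + (pdy (pdy v) x y * v x y + pdy v x y * pdy v x y)))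
        + (pdy P x y * v x y + P x y * pdy v x y)
        - 2 * ε * (pdy v x y * pdy v x y + v x y * pdy (pdy v) x y)) y :=
    ((((hUy.mul hU).add (hVy.mul hV)).const_mul ε).neg.add (hP0.mul hV)).sub
      ((hV.mul hVy).const_mul (2 * ε))
  exact H.deriv

end AB

/-- the energy identity for the viscous and pressure terms under the
multiplier `(u,v)`, using the stress-free outflow conditions. -/
theorem stmt13 (L ε : ℝ) (hL0 : 0 < L) (hL1 : L ≤ 1) (hε0 : 0 < ε) (hε1 : ε < 1)
    (u v P : ℝ → ℝ → ℝ)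
    (hu : ContDiff ℝ 2 (uncurry u)) (hv : ContDiff ℝ 2 (uncurry v))
    (hP : ContDiff ℝ 1 (uncurry P))
    (hdiv : ∀ p ∈ Omg L, pdx u p.1 p.2 + pdy v p.1 p.2 = 0)
    (hbcx0 : ∀ y ∈ Icc (0:ℝ) 2, u 0 y = 0 ∧ v 0 y = 0)
    (hbcy : ∀ x ∈ Icc (0:ℝ) L, u x 0 = 0 ∧ v x 0 = 0 ∧ u x 2 = 0 ∧ v x 2 = 0)
    (hbcL : ∀ y ∈ Icc (0:ℝ) 2, pdy u L y + pdx v L y = 0 ∧ P L y = 2 * ε * pdx u L y) :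
    intO L (fun x y => -(ε * plap u x y) * u x y)
      + intO L (fun x y => -(ε * plap v x y) * v x y)
      + intO L (fun x y => u x y * pdx P x y + v x y * pdy P x y)
    = ε * intO L (fun x y =>
        (pdy u x y)^2 + (pdx v x y)^2 + 4 * (pdy v x y)^2
          + 2 * (pdx v x y) * (pdy u x y)) := by
  have hud : Differentiable ℝ (uncurry u) := hu.differentiable (by norm_num)
  have hvd : Differentiable ℝ (uncurry v) := hv.differentiable (by norm_num)
  have hux1 : ContDiff ℝ 1 (uncurry (pdx u)) := contDiff_uncurry_pdx u hu (by norm_num)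
  have huy1 : ContDiff ℝ 1 (uncurry (pdy u)) := contDiff_uncurry_pdy u hu (by norm_num)
  have hvx1 : ContDiff ℝ 1 (uncurry (pdx v)) := contDiff_uncurry_pdx v hv (by norm_num)
  have hvy1 : ContDiff ℝ 1 (uncurry (pdy v)) := contDiff_uncurry_pdy v hv (by norm_num)
  have cu : Continuous (fun p : ℝ × ℝ => u p.1 p.2) := hu.continuous
  have cv : Continuous (fun p : ℝ × ℝ => v p.1 p.2) := hv.continuous
  have cP : Continuous (fun p : ℝ × ℝ => P p.1 p.2) := hP.continuous
  have cux : Continuous (fun p : ℝ × ℝ => pdx u p.1 p.2) := hux1.continuous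
  have cuy : Continuous (fun p : ℝ × ℝ => pdy u p.1 p.2) := huy1.continuous
  have cvx : Continuous (fun p : ℝ × ℝ => pdx v p.1 p.2) := hvx1.continuous
  have cvy : Continuous (fun p : ℝ × ℝ => pdy v p.1 p.2) := hvy1.continuous
  have cuxx : Continuous (fun p : ℝ × ℝ => pdx (pdx u) p.1 p.2) :=
    (contDiff_uncurry_pdx (m := 0) (pdx u) hux1 (by norm_num)).continuous
  have cuyy : Continuous (fun p : ℝ × ℝ => pdy (pdy u) p.1 p.2) :=
    (contDiff_uncurry_pdy (m := 0) (pdy u) huy1 (by norm_num)).continuous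
  have cvxx : Continuous (fun p : ℝ × ℝ => pdx (pdx v) p.1 p.2) :=
    (contDiff_uncurry_pdx (m := 0) (pdx v) hvx1 (by norm_num)).continuous
  have cvyy : Continuous (fun p : ℝ × ℝ => pdy (pdy v) p.1 p.2) :=
    (contDiff_uncurry_pdy (m := 0) (pdy v) hvy1 (by norm_num)).continuous
  have cPx : Continuous (fun p : ℝ × ℝ => pdx P p.1 p.2) :=
    (contDiff_uncurry_pdx (m := 0) P hP (by norm_num)).continuous
  have cPy : Continuous (fun p : ℝ × ℝ => pdy P p.1 p.2) :=
    (contDiff_uncurry_pdy (m := 0) P hP (by norm_num)).continuous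
  have hAf : ContDiff ℝ 1 (uncurry (Afun ε u v P)) := contDiff_uncurry_Afun ε u v P hu hv hP
  have hBf : ContDiff ℝ 1 (uncurry (Bfun ε u v P)) := contDiff_uncurry_Bfun ε u v P hu hv hP
  have cpdxA : Continuous (fun p : ℝ × ℝ => pdx (Afun ε u v P) p.1 p.2) :=
    (contDiff_uncurry_pdx (m := 0) _ hAf (by norm_num)).continuous
  have cpdyB : Continuous (fun p : ℝ × ℝ => pdy (Bfun ε u v P) p.1 p.2) :=
    (contDiff_uncurry_pdy (m := 0) _ hBf (by norm_num)).continuous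
  have c1 : Continuous (fun p : ℝ × ℝ => -(ε * plap u p.1 p.2) * u p.1 p.2) := by
    have h : (fun p : ℝ × ℝ => -(ε * plap u p.1 p.2) * u p.1 p.2)
        = fun p : ℝ × ℝ => -(ε * (pdx (pdx u) p.1 p.2 + pdy (pdy u) p.1 p.2)) * u p.1 p.2 := rfl
    rw [h]
    exact ((continuous_const.mul (cuxx.add cuyy)).neg).mul cu
  have c2 : Continuous (fun p : ℝ × ℝ => -(ε * plap v p.1 p.2) * v p.1 p.2) := by
    have h : (fun p : ℝ × ℝ => -(ε * plap v p.1 p.2) * v p.1 p.2)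
        = fun p : ℝ × ℝ => -(ε * (pdx (pdx v) p.1 p.2 + pdy (pdy v) p.1 p.2)) * v p.1 p.2 := rfl
    rw [h]
    exact ((continuous_const.mul (cvxx.add cvyy)).neg).mul cv
  have c3 : Continuous
      (fun p : ℝ × ℝ => u p.1 p.2 * pdx P p.1 p.2 + v p.1 p.2 * pdy P p.1 p.2) :=
    (cu.mul cPx).add (cv.mul cPy)
  have cR : Continuous (fun p : ℝ × ℝ => (pdy u p.1 p.2)^2 + (pdx v p.1 p.2)^2
      + 4 * (pdy v p.1 p.2)^2 + 2 * (pdx v p.1 p.2) * (pdy u p.1 p.2)) :=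
    (((cuy.pow 2).add (cvx.pow 2)).add (continuous_const.mul (cvy.pow 2))).add
      ((continuous_const.mul cvx).mul cuy)
  -- incompressibility up to the outflow boundary
  have hdivL : ∀ y ∈ Icc (0:ℝ) 2, pdx u L y + pdy v L y = 0 := by
    intro y hy
    have hcl : closure (Omg L) = Icc (0:ℝ) L ×ˢ Icc (0:ℝ) 2 := by
      rw [Omg, closure_prod_eq, closure_Ioo hL0.ne, closure_Ioo (by norm_num : (0:ℝ) ≠ 2)]
    have hmem : ((L, y) : ℝ × ℝ) ∈ closure (Omg L) := by
      rw [hcl]; exact ⟨⟨hL0.le, le_rfl⟩, hy⟩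
    have hzero : closure (Omg L) ⊆ {p : ℝ × ℝ | pdx u p.1 p.2 + pdy v p.1 p.2 = 0} := by
      apply closure_minimal
      · intro p hp; exact hdiv p hp
      · exact isClosed_eq (cux.add cvy) continuous_const
    exact hzero hmem
  -- the pointwise divergence identity in Ω
  have hkey : ∀ p ∈ Omg L,
      -(ε * plap u p.1 p.2) * u p.1 p.2 + -(ε * plap v p.1 p.2) * v p.1 p.2
        + (u p.1 p.2 * pdx P p.1 p.2 + v p.1 p.2 * pdy P p.1 p.2)
      = ε * ((pdy u p.1 p.2)^2 + (pdx v p.1 p.2)^2 + 4 * (pdy v p.1 p.2)^2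
            + 2 * (pdx v p.1 p.2) * (pdy u p.1 p.2))
        + (pdx (Afun ε u v P) p.1 p.2 + pdy (Bfun ε u v P) p.1 p.2) := by
    rintro ⟨x, y⟩ ⟨hx, hy⟩
    have h1 : pdx u x y + pdy v x y = 0 := hdiv (x, y) ⟨hx, hy⟩
    have h2 : pdy (pdx u) x y = -(pdy (pdy v) x y) := by
      have hev : (fun t => pdx u x t) =ᶠ[nhds y] fun t => -pdy v x t := by
        filter_upwards [Ioo_mem_nhds hy.1 hy.2] with t ht
        have := hdiv (x, t) ⟨hx, ht⟩
        linarith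
      have he : pdy (pdx u) x y = deriv (fun t => -pdy v x t) y := hev.deriv_eq
      rw [he, deriv.fun_neg]
      rfl
    have h3 : pdx (pdy u) x y = pdy (pdx u) x y := pdx_pdy_comm u hu x y
    simp only [plap]
    rw [pdx_Afun ε u v P hu hv hP x y, pdy_Bfun ε u v P hu hv hP x y, h3, h2]
    linear_combination (ε * (pdx u x y - pdy v x y) - P x y) * h1
  -- flux of A through the vertical boundaries
  have hfluxA : intO L (pdx (Afun ε u v P)) = 0 := by
    rw [intO_pdx hL0.le _ hAf]
    have hcongA : ∀ y ∈ uIcc (0:ℝ) 2, Afun ε u v P L y - Afun ε u v P 0 y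
        = -ε * (pdy u L y * v L y + u L y * pdy v L y) := by
      intro y hy
      rw [uIcc_of_le (by norm_num : (0:ℝ) ≤ 2)] at hy
      obtain ⟨hs, hp⟩ := hbcL y hy
      have hd0 := hdivL y hy
      have hu0 := (hbcx0 y hy).1
      have hv0 := (hbcx0 y hy).2
      simp only [Afun]
      rw [hu0, hv0, hp]
      linear_combination ε * u L y * hd0 - ε * v L y * hs
    rw [intervalIntegral.integral_congr hcongA]
    have hG : ∀ y ∈ uIcc (0:ℝ) 2, HasDerivAt (fun t => -ε * (u L t * v L t))
        (-ε * (pdy u L y * v L y + u L y * pdy v L y)) y := fun y _ =>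
      ((hasDerivAt_pdy u L y (hud _)).mul (hasDerivAt_pdy v L y (hvd _))).const_mul (-ε)
    have hInt : IntervalIntegrable
        (fun y => -ε * (pdy u L y * v L y + u L y * pdy v L y)) volume 0 2 := by
      apply Continuous.intervalIntegrable
      have hc : Continuous (fun t : ℝ => ((L, t) : ℝ × ℝ)) :=
        continuous_const.prodMk continuous_id
      exact continuous_const.mul (((cuy.comp hc).mul (cv.comp hc)).add
        ((cu.comp hc).mul (cvy.comp hc)))
    rw [intervalIntegral.integral_eq_sub_of_hasDerivAt hG hInt]
    obtain ⟨h1, h2, h3, h4⟩ := hbcy L ⟨hL0.le, le_rfl⟩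
    rw [h1, h2, h3, h4]
    ring
  -- flux of B through the horizontal boundaries
  have hfluxB : intO L (pdy (Bfun ε u v P)) = 0 := by
    rw [intO_pdy hL0.le _ hBf]
    have hcongB : ∀ x ∈ uIcc (0:ℝ) L,
        Bfun ε u v P x 2 - Bfun ε u v P x 0 = (fun _ : ℝ => (0:ℝ)) x := by
      intro x hx
      rw [uIcc_of_le hL0.le] at hx
      obtain ⟨h1, h2, h3, h4⟩ := hbcy x hx
      simp only [Bfun]
      rw [h1, h2, h3, h4]
      ring
    rw [intervalIntegral.integral_congr hcongB, intervalIntegral.integral_zero]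
  -- assembling everything
  have e1 : intO L (fun x y => -(ε * plap u x y) * u x y)
      + intO L (fun x y => -(ε * plap v x y) * v x y)
      = intO L (fun x y => -(ε * plap u x y) * u x y + -(ε * plap v x y) * v x y) :=
    intO_add c1 c2
  have e2 : intO L (fun x y => -(ε * plap u x y) * u x y + -(ε * plap v x y) * v x y)
      + intO L (fun x y => u x y * pdx P x y + v x y * pdy P x y)
      = intO L (fun x y => -(ε * plap u x y) * u x y + -(ε * plap v x y) * v x y
          + (u x y * pdx P x y + v x y * pdy P x y)) :=
    intO_add (c1.add c2) c3
  have e3 : intO L (fun x y => -(ε * plap u x y) * u x y + -(ε * plap v x y) * v x y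
          + (u x y * pdx P x y + v x y * pdy P x y))
      = intO L (fun x y => ε * ((pdy u x y)^2 + (pdx v x y)^2 + 4 * (pdy v x y)^2
            + 2 * (pdx v x y) * (pdy u x y))
          + (pdx (Afun ε u v P) x y + pdy (Bfun ε u v P) x y)) := by
    unfold intO
    exact MeasureTheory.setIntegral_congr_fun
      (show MeasurableSet (Omg L) from measurableSet_Ioo.prod measurableSet_Ioo)
      fun p hp => hkey p hp
  have e4 : intO L (fun x y => ε * ((pdy u x y)^2 + (pdx v x y)^2 + 4 * (pdy v x y)^2
            + 2 * (pdx v x y) * (pdy u x y))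
          + (pdx (Afun ε u v P) x y + pdy (Bfun ε u v P) x y))
      = intO L (fun x y => ε * ((pdy u x y)^2 + (pdx v x y)^2 + 4 * (pdy v x y)^2
            + 2 * (pdx v x y) * (pdy u x y)))
        + intO L (fun x y => pdx (Afun ε u v P) x y + pdy (Bfun ε u v P) x y) :=
    (intO_add (continuous_const.mul cR) (cpdxA.add cpdyB)).symm
  have e5 : intO L (fun x y => ε * ((pdy u x y)^2 + (pdx v x y)^2 + 4 * (pdy v x y)^2
            + 2 * (pdx v x y) * (pdy u x y)))
      = ε * intO L (fun x y => (pdy u x y)^2 + (pdx v x y)^2 + 4 * (pdy v x y)^2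
            + 2 * (pdx v x y) * (pdy u x y)) := by
    unfold intO
    exact integral_const_mul ε _
  have e6 : intO L (fun x y => pdx (Afun ε u v P) x y + pdy (Bfun ε u v P) x y)
      = intO L (pdx (Afun ε u v P)) + intO L (pdy (Bfun ε u v P)) :=
    (intO_add cpdxA cpdyB).symm
  rw [e1, e2, e3, e4, e5, e6, hfluxA, hfluxB]
  ring
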